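/- Let C be a closed convex cone in a finite-dimensional real vector space V, and assume the dual cone C* ⊆ V* has nonempty interior. Let K, D ∈ V* be such that ⟨D, α⟩ > 0 for every nonzero α ∈ C with ⟨K, α⟩ ≥ 0. Then there exist δ > 0 and A in the interior of C* such that D = δ·K + A. -/

import Mathlib

open scoped Pointwise

/-- The dual cone of a set `C` in a real inner product space. -/
def innerDual {V : Type*} [NormedAddCommGroup V] [InnerProductSpace ℝ V] (C : Set V) :
    Set V :=
  {y | ∀ x ∈ C, (0 : ℝ) ≤ inner ℝ y x}

/-- Abstract form of Lemma 4.3: if `D` is strictly positive on the nonzero part of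
`C ∩ {K ≥ 0}`, and the dual cone of `C` has nonempty interior, then
`D = δ • K + A` with `δ > 0` and `A` in the interior of the dual cone. -/
theorem eq_smul_add_interior_dual_of_pos_on_nonneg_part
    {V : Type*} [NormedAddCommGroup V] [InnerProductSpace ℝ V] [FiniteDimensional ℝ V]
    (C : Set V) (hCclosed : IsClosed C) (hCconv : Convex ℝ C)
    (hCcone : ∀ x ∈ C, ∀ t : ℝ, 0 ≤ t → t • x ∈ C)
    (hint : (interior (innerDual C)).Nonempty)
    (K D : V)
    (hD : ∀ α ∈ C, α ≠ 0 → (0 : ℝ) ≤ inner ℝ K α → (0 : ℝ) < inner ℝ D α) :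
    ∃ δ : ℝ, 0 < δ ∧ ∃ A ∈ interior (innerDual C), D = δ • K + A := by
  -- it suffices to find `δ > 0` with `D - δ • K` in the interior of the dual
  suffices h : ∃ δ : ℝ, 0 < δ ∧ D - δ • K ∈ interior (innerDual C) by
    obtain ⟨δ, hδ, hA⟩ := h
    exact ⟨δ, hδ, D - δ • K, hA, by abel⟩
  -- dispose of the case `C = ∅`
  rcases C.eq_empty_or_nonempty with rfl | hne
  · refine ⟨1, one_pos, ?_⟩
    have : innerDual (∅ : Set V) = Set.univ := by
      ext y; simp [innerDual]
    rw [this, interior_univ]; trivial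
  by_contra hcon
  push_neg at hcon
  -- `C` as a convex cone
  have h0C : (0 : V) ∈ C := by
    obtain ⟨x, hx⟩ := hne
    simpa using hCcone x hx 0 le_rfl
  let Cc : ConvexCone ℝ V :=
    { carrier := C
      smul_mem' := fun c hc x hx => hCcone x hx c hc.le
      add_mem' := by
        intro x hx y hy
        have hmid : (1/2 : ℝ) • x + (1/2 : ℝ) • y ∈ C :=
          hCconv hx hy (by norm_num) (by norm_num) (by norm_num)
        have := hCcone _ hmid 2 (by norm_num)
        rwa [smul_add, smul_smul, smul_smul, (by norm_num : (2:ℝ) * (1/2) = 1),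
          one_smul, one_smul] at this }
  -- our dual set is the inner dual cone
  have hdual : innerDual C = ((ProperCone.innerDual C : ProperCone ℝ V) : Set V) := by
    ext y
    simp only [innerDual, Set.mem_setOf_eq, SetLike.mem_coe, ProperCone.mem_innerDual]
    constructor
    · intro h x hx; rw [real_inner_comm]; exact h x hx
    · intro h x hx; rw [real_inner_comm]; exact h hx
  have hdconv : Convex ℝ (innerDual C) := by
    rw [hdual]; exact (ProperCone.innerDual C).convex
  have hdclosed : IsClosed (innerDual C) := by
    rw [hdual]; exact (ProperCone.innerDual C).isClosed
  -- the ray `{D - δ • K : δ > 0}`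
  set L : Set V := (fun δ : ℝ => D - δ • K) '' Set.Ioi 0 with hL
  have hLconv : Convex ℝ L := by
    rintro x ⟨δ₁, hδ₁, rfl⟩ y ⟨δ₂, hδ₂, rfl⟩ a b ha hb hab
    refine ⟨a * δ₁ + b * δ₂, ?_, ?_⟩
    · rcases lt_or_ge 0 a with ha' | ha'
      · have : 0 < a * δ₁ := mul_pos ha' hδ₁
        have : 0 ≤ b * δ₂ := mul_nonneg hb hδ₂.le
        simp only [Set.mem_Ioi]; linarith
      · have ha0 : a = 0 := le_antisymm ha' ha
        have hb1 : b = 1 := by linarith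
        simp only [Set.mem_Ioi, ha0, hb1]; simpa using hδ₂
    · simp only
      have hD' : a • D + b • D = D := by rw [← add_smul, hab, one_smul]
      conv_lhs => rw [← hD']
      rw [smul_sub, smul_sub, add_smul, mul_smul, mul_smul]
      abel
  -- the ray is disjoint from the interior of the dual
  have hdisj : Disjoint (interior (innerDual C)) L := by
    rw [Set.disjoint_right]
    rintro x ⟨δ, hδ, rfl⟩ hx
    exact hcon δ hδ hx
  -- separate
  obtain ⟨f, u, h1, h2⟩ :=
    geometric_hahn_banach_open (hdconv.interior) isOpen_interior hLconv hdisj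
  obtain ⟨a₀, ha₀⟩ := hint
  -- the interior of the dual is stable under positive scaling
  have hscale : ∀ t : ℝ, 0 < t → ∀ y ∈ interior (innerDual C),
      t • y ∈ interior (innerDual C) := by
    intro t ht y hy
    have hsub : t • innerDual C ⊆ innerDual C := by
      rintro _ ⟨z, hz, rfl⟩ x hx
      rw [real_inner_smul_left]
      exact mul_nonneg ht.le (hz x hx)
    have : t • y ∈ t • interior (innerDual C) := Set.smul_mem_smul_set hy
    rw [← interior_smul₀ ht.ne' (innerDual C)] at this
    exact interior_mono hsub this
  -- `f ≤ 0` on the interior of the dual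
  have hfle : ∀ y ∈ interior (innerDual C), f y ≤ 0 := by
    intro y hy
    by_contra hpos
    push_neg at hpos
    set t : ℝ := (max u 0 + 1) / f y with htdef
    have ht : 0 < t := div_pos (by positivity) hpos
    have := h1 (t • y) (hscale t ht y hy)
    rw [map_smul, smul_eq_mul] at this
    rw [htdef] at this
    rw [div_mul_cancel₀ _ hpos.ne'] at this
    have : u ≤ max u 0 := le_max_left _ _
    linarith [h1 (t • y) (hscale t ht y hy), le_max_left u 0]
  -- `0 ≤ u`
  have hu0 : 0 ≤ u := by
    by_contra hu
    push_neg at hu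
    have hfa₀ : f a₀ ≤ 0 := hfle a₀ ha₀
    rcases hfa₀.lt_or_eq with hlt | heq
    · set t : ℝ := u / (2 * f a₀) with htdef
      have ht : 0 < t := div_pos_iff.mpr (Or.inr ⟨hu, by linarith⟩)
      have hne0 : f a₀ ≠ 0 := hlt.ne
      have h := h1 (t • a₀) (hscale t ht a₀ ha₀)
      rw [map_smul, smul_eq_mul, htdef] at h
      have hval : u / (2 * f a₀) * f a₀ = u / 2 := by
        field_simp
      rw [hval] at h
      linarith
    · have := h1 a₀ ha₀
      rw [heq] at this
      linarith
  -- `f ≤ 0` on the whole dual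
  have hfdual : ∀ y ∈ innerDual C, f y ≤ 0 := by
    intro y hy
    by_contra hpos
    push_neg at hpos
    have hfa₀ : f a₀ ≤ 0 := hfle a₀ ha₀
    set g := f y with hg
    set h := f a₀ with hh
    have hgh : 0 < g - h := by linarith
    set t : ℝ := g / (2 * (g - h)) with htdef
    have ht : 0 < t := div_pos hpos (by linarith)
    have ht1 : t ≤ 1/2 := by
      rw [htdef, div_le_iff₀ (by linarith)]
      linarith
    have hmem : (1 - t) • y + t • a₀ ∈ interior (innerDual C) :=
      hdconv.combo_closure_interior_mem_interior (subset_closure hy) ha₀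
        (by linarith) ht (by ring)
    have hle := hfle _ hmem
    rw [map_add, map_smul, map_smul, smul_eq_mul, smul_eq_mul] at hle
    have htval : t * (g - h) = g / 2 := by
      rw [htdef]; field_simp
    nlinarith
  -- Riesz representation of `f`
  set α : V := (InnerProductSpace.toDual ℝ V).symm f with hα
  have hαf : ∀ x : V, (inner ℝ α x : ℝ) = f x := fun x =>
    InnerProductSpace.toDual_symm_apply
  -- `β := -α` lies in the double dual, hence in `C`
  set β : V := -α with hβ
  have hβdd : β ∈ ProperCone.innerDual ((ProperCone.innerDual C : ProperCone ℝ V) : Set V) := by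
    rw [ProperCone.mem_innerDual]
    intro x hx
    have hx : x ∈ innerDual C := by rw [hdual]; exact hx
    have : (inner ℝ x β : ℝ) = -(f x) := by
      rw [hβ, inner_neg_right, real_inner_comm, hαf]
    rw [this]
    linarith [hfdual x hx]
  let Cp : ProperCone ℝ V :=
    { carrier := C
      add_mem' := fun hx hy => Cc.add_mem' hx hy
      zero_mem' := h0C
      smul_mem' := fun c x hx => hCcone x hx c c.2
      isClosed' := hCclosed }
  have hbipolar := ProperCone.innerDual_innerDual Cp
  have hCp : (Cp : Set V) = C := rfl
  rw [hCp] at hbipolar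
  have hβC : β ∈ C := by
    have : β ∈ ProperCone.innerDual ((ProperCone.innerDual C) : Set V) := hβdd
    rw [hbipolar] at this
    exact this
  -- `β ≠ 0`
  have hβne : β ≠ 0 := by
    intro h0
    have hα0 : α = 0 := by rwa [hβ, neg_eq_zero] at h0
    have hf0 : ∀ x : V, f x = 0 := by
      intro x
      rw [← hαf x, hα0, inner_zero_left]
    have hu1 : 0 < u := by
      have := h1 a₀ ha₀
      rwa [hf0 a₀] at this
    have : u ≤ f (D - (1:ℝ) • K) := h2 _ ⟨1, Set.mem_Ioi.mpr one_pos, rfl⟩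
    rw [hf0] at this
    linarith
  -- estimates from the separation on the ray
  have hray : ∀ δ : ℝ, 0 < δ → 0 ≤ f D - δ * f K := by
    intro δ hδ
    have := h2 (D - δ • K) ⟨δ, hδ, rfl⟩
    rw [map_sub, map_smul, smul_eq_mul] at this
    linarith
  have hKpart : f K ≤ 0 := by
    by_contra hpos
    push_neg at hpos
    set δ : ℝ := (max (f D) 0 + 1) / f K with hδdef
    have hδ : 0 < δ := div_pos (by positivity) hpos
    have := hray δ hδ
    rw [hδdef, div_mul_cancel₀ _ hpos.ne'] at this
    have : f D ≤ max (f D) 0 := le_max_left _ _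
    linarith [hray δ hδ, le_max_left (f D) 0,
      (by rw [hδdef, div_mul_cancel₀ _ hpos.ne'] : δ * f K = max (f D) 0 + 1)]
  have hDpart : 0 ≤ f D := by
    by_contra hneg
    push_neg at hneg
    rcases hKpart.lt_or_eq with hlt | heq
    · set δ : ℝ := f D / (2 * f K) with hδdef
      have hδ : 0 < δ := div_pos_iff.mpr (Or.inr ⟨hneg, by linarith⟩)
      have hne0 : f K ≠ 0 := hlt.ne
      have h := hray δ hδ
      have hδval : δ * f K = f D / 2 := by
        rw [hδdef]; field_simp
      rw [hδval] at h
      linarith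
    · have := hray 1 one_pos
      rw [heq] at this
      linarith
  -- contradiction with `hD`
  have hKβ : (0 : ℝ) ≤ inner ℝ K β := by
    rw [hβ, inner_neg_right, real_inner_comm, hαf]
    linarith
  have hDβ : (inner ℝ D β : ℝ) ≤ 0 := by
    rw [hβ, inner_neg_right, real_inner_comm, hαf]
    linarith
  linarith [hD β hβC hβne hKβ]
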